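/- log π = 1 + ∑_{k=2}^∞ (1 − (1 − 2^{1-k})ζ(k))/k. -/

import Mathlib

section stmt7aux
open Real Filter Finset Topology


-- fiberwise sum over k for fixed j
lemma aux_logser (j : ℕ) :
    HasSum (fun k : ℕ => ((-1:ℝ)^j / (j+2)^(k+2)) / (k+2))
      ((-1:ℝ)^j * (Real.log ((j+2)/(j+1)) - 1/(j+2))) := by
  have hj : (0:ℝ) ≤ j := Nat.cast_nonneg j
  set x : ℝ := 1/(j+2) with hx
  have hx0 : (0:ℝ) < x := by positivity
  have hxlt : |x| < 1 := by
    rw [abs_of_pos hx0, hx, div_lt_one (by positivity)]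
    linarith
  have h := Real.hasSum_pow_div_log_of_abs_lt_one hxlt
  have h1 := (hasSum_nat_add_iff' 1).2 h
  have h2 : HasSum (fun n : ℕ => x ^ (n + 2) / ((n:ℝ) + 2))
      (Real.log ((j+2)/(j+1)) - 1/(j+2)) := by
    convert h1 using 1
    · rfl
    · funext n; push_cast; ring_nf
    · have h1x : (1:ℝ) - x = ((j:ℝ)+1)/((j:ℝ)+2) := by rw [hx]; field_simp; ring
      rw [h1x, Real.log_div (by positivity) (by positivity),
        Real.log_div (by positivity) (by positivity)]
      simp [hx]
  have h3 := h2.mul_left ((-1:ℝ)^j)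
  convert h3 using 2 with k
  · rfl
  rw [hx]
  push_cast
  rw [div_pow, one_pow]
  ring

lemma aux_summable :
    Summable (fun p : ℕ × ℕ => ((-1:ℝ)^p.1 / (p.1+2)^(p.2+2)) / (p.2+2)) := by
  rw [← summable_abs_iff]
  have hbound : ∀ p : ℕ × ℕ, |((-1:ℝ)^p.1 / (p.1+2)^(p.2+2)) / (p.2+2)|
      ≤ (1/((p.1:ℝ)+2)) ^ (p.2+2) := by
    intro ⟨j, k⟩
    have hj : (0:ℝ) < (j:ℝ)+2 := by positivity
    rw [abs_div, abs_div, abs_pow, abs_neg, abs_one, one_pow, abs_of_pos (by positivity),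
      abs_of_pos (by positivity : (0:ℝ) < (k:ℝ)+2), div_pow, one_pow]
    rw [div_div]
    apply div_le_div_of_nonneg_left (by norm_num) (by positivity)
    nlinarith [pow_pos hj (k+2), Nat.cast_nonneg (α := ℝ) k]
  refine Summable.of_nonneg_of_le (fun _ => abs_nonneg _) hbound ?_
  rw [summable_prod_of_nonneg (fun p => by positivity)]
  constructor
  · intro j
    have hx : |(1:ℝ)/((j:ℝ)+2)| < 1 := by
      rw [abs_of_pos (by positivity), div_lt_one (by positivity)]
      have : (0:ℝ) ≤ j := Nat.cast_nonneg j
      linarith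
    exact (summable_geometric_of_abs_lt_one hx).comp_injective (add_left_injective 2)
  · have key : ∀ j : ℕ, ∑' k : ℕ, (1/((j:ℝ)+2)) ^ (k+2) ≤ 1/((j:ℝ)+1)^2 := by
      intro j
      set x : ℝ := 1/((j:ℝ)+2) with hxd
      have hj : (0:ℝ) ≤ j := Nat.cast_nonneg j
      have hx0 : (0:ℝ) < x := by positivity
      have hx1 : x < 1 := by rw [hxd, div_lt_one (by positivity)]; linarith
      have hg : HasSum (fun k : ℕ => x^(k+2)) (x^2 * (1-x)⁻¹) := by
        have := (hasSum_geometric_of_lt_one hx0.le hx1).mul_left (x^2)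
        convert this using 2 with k
        · rfl
        ring
      rw [hg.tsum_eq]
      have h1x : (1:ℝ) - x = ((j:ℝ)+1)/((j:ℝ)+2) := by rw [hxd]; field_simp; ring
      rw [h1x, hxd]
      rw [div_pow, one_pow, inv_div]
      rw [div_mul_div_comm, one_mul]
      rw [div_le_div_iff₀ (by positivity) (by positivity)]
      nlinarith
    refine Summable.of_nonneg_of_le (fun j => tsum_nonneg (fun k => by positivity)) key ?_
    have : Summable (fun j : ℕ => 1/((j:ℝ)+1)^2) := by
      have := Real.summable_one_div_nat_pow.2 (le_refl 2)
      exact_mod_cast (summable_nat_add_iff 1).2 this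
    exact this

lemma aux_zeta_summable (k : ℕ) : Summable (fun n : ℕ => (1:ℝ) / ((n:ℝ)+1) ^ (k+2)) := by
  have h : Summable (fun n : ℕ => (1:ℝ) / (n:ℝ) ^ (k+2)) :=
    Real.summable_one_div_nat_pow.2 (by omega)
  have := (summable_nat_add_iff 1).2 h
  exact this.congr (fun n => by push_cast; ring)

lemma aux_eta (k : ℕ) :
    HasSum (fun n : ℕ => (-1:ℝ)^n / ((n:ℝ)+2)^(k+2))
      (1 - (1 - 2 ^ (-(k + 1) : ℤ)) * ∑' n : ℕ, (1 : ℝ) / ((n:ℝ) + 1) ^ (k + 2)) := by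
  set Z : ℝ := ∑' n : ℕ, (1 : ℝ) / ((n:ℝ) + 1) ^ (k + 2) with hZd
  have hZ : HasSum (fun n : ℕ => (1:ℝ) / ((n:ℝ)+1) ^ (k+2)) Z := (aux_zeta_summable k).hasSum
  -- even terms
  have heven : HasSum (fun m : ℕ => (1:ℝ) / ((2*(m:ℝ)+2)) ^ (k+2)) (((2:ℝ)^(k+2))⁻¹ * Z) := by
    have := hZ.mul_left ((2:ℝ)^(k+2))⁻¹
    convert this using 2 with m
    · rfl
    rw [show (2*(m:ℝ)+2) = 2*((m:ℝ)+1) by ring, mul_pow]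
    field_simp
  have hodd2 : HasSum (fun m : ℕ => (2:ℝ) / ((2*(m:ℝ)+2)) ^ (k+2))
      (2 * (((2:ℝ)^(k+2))⁻¹ * Z)) := by
    have := heven.mul_left 2
    convert this using 2 with m
    · rfl
    ring
  -- embed odd terms
  set g : ℕ → ℝ := fun n => if n % 2 = 1 then (2:ℝ) / ((n:ℝ)+1)^(k+2) else 0 with hgd
  have hg : HasSum g (2 * (((2:ℝ)^(k+2))⁻¹ * Z)) := by
    have hinj : Function.Injective (fun m : ℕ => 2*m+1) := fun a b h => by dsimp at h; omega
    have h0 : ∀ n, n ∉ Set.range (fun m : ℕ => 2*m+1) → g n = 0 := by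
      intro n hn
      have hmod : n % 2 = 0 := by
        by_contra hc
        exact hn ⟨n/2, by dsimp; omega⟩
      simp [hgd, hmod]
    rw [← hinj.hasSum_iff h0]
    have hco : (g ∘ fun m : ℕ => 2*m+1) = fun m : ℕ => (2:ℝ)/((2*(m:ℝ)+2))^(k+2) := by
      funext m
      simp only [Function.comp, hgd]
      rw [if_pos (by omega : (2*m+1) % 2 = 1)]
      push_cast
      ring_nf
    rw [hco]
    exact hodd2
  have heta : HasSum (fun n : ℕ => (-1:ℝ)^n / ((n:ℝ)+1)^(k+2))
      (Z - 2 * (((2:ℝ)^(k+2))⁻¹ * Z)) := by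
    have hs := hZ.sub hg
    convert hs using 1
    · rfl
    funext n
    rcases Nat.even_or_odd n with h | h
    · have h2 : n % 2 = 0 := Nat.even_iff.mp h
      simp [hgd, h2, h.neg_one_pow]
    · have h2 : n % 2 = 1 := Nat.odd_iff.mp h
      simp only [hgd, h2, if_pos, h.neg_one_pow]
      ring
  -- drop n = 0 term and negate
  have h1 := (hasSum_nat_add_iff' 1).2 heta
  have h2 := h1.neg
  convert h2 using 1
  · rfl
  · funext n
    rw [pow_succ]
    push_cast
    ring
  · have hzp : (2:ℝ) ^ (-(k + 1) : ℤ) = ((2:ℝ)^(k+1))⁻¹ := by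
      rw [zpow_neg]
      norm_cast
    rw [hzp]
    simp only [Finset.range_one, Finset.sum_singleton, Nat.cast_zero, pow_zero]
    rw [show ((2:ℝ)^(k+2)) = 2 * 2^(k+1) by ring]
    have h2p : ((2:ℝ)^(k+1)) ≠ 0 := by positivity
    field_simp
    ring

lemma aux_pair (t : ℕ → ℝ) (K : ℕ) :
    ∑ j ∈ range (2*K), t j = ∑ i ∈ range K, (t (2*i) + t (2*i+1)) := by
  induction K with
  | zero => simp
  | succ K ih =>
    rw [show 2*(K+1) = (2*K+1)+1 by ring, Finset.sum_range_succ, Finset.sum_range_succ,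
      Finset.sum_range_succ, ih]
    ring

lemma aux_wallis_log :
    Tendsto (fun K : ℕ => ∑ j ∈ range (2*K),
      ((-1:ℝ)^j * (Real.log ((j:ℝ)+2) - Real.log ((j:ℝ)+1)))) atTop
      (𝓝 (Real.log (Real.pi/2))) := by
  have hlog := Real.tendsto_prod_pi_div_two.log (by positivity)
  refine Tendsto.congr (fun K => ?_) hlog
  rw [aux_pair]
  rw [Real.log_prod (fun i _ => by positivity)]
  refine Finset.sum_congr rfl (fun i _ => ?_)
  have h1 : (0:ℝ) < 2*(i:ℝ)+1 := by positivity
  have h2 : (0:ℝ) < 2*(i:ℝ)+2 := by positivity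
  have h3 : (0:ℝ) < 2*(i:ℝ)+3 := by positivity
  rw [Real.log_mul (by positivity) (by positivity),
    Real.log_div h2.ne' h1.ne', Real.log_div h2.ne' h3.ne']
  have e1 : (-1:ℝ)^(2*i) = 1 := Even.neg_one_pow ⟨i, by ring⟩
  have e2 : (-1:ℝ)^(2*i+1) = -1 := Odd.neg_one_pow ⟨i, by ring⟩
  rw [e1, e2]
  push_cast
  ring

lemma aux_B (K : ℕ) : ∑ j ∈ range (2*K), ((-1:ℝ)^j / ((j:ℝ)+2))
    = 1 - ((harmonic (2*K) : ℝ) - (harmonic K : ℝ)) - 1/(2*(K:ℝ)+1) := by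
  induction K with
  | zero => simp
  | succ K ih =>
    rw [show 2*(K+1) = (2*K+1)+1 by ring, Finset.sum_range_succ, Finset.sum_range_succ, ih]
    have e1 : (-1:ℝ)^(2*K) = 1 := Even.neg_one_pow ⟨K, by ring⟩
    have e2 : (-1:ℝ)^(2*K+1) = -1 := Odd.neg_one_pow ⟨K, by ring⟩
    rw [e1, e2, show (2*K+1)+1 = 2*(K+1) by ring, show 2*(K+1) = 2*K+1+1 by ring,
      harmonic_succ, harmonic_succ, harmonic_succ]
    push_cast
    have d1 : (2*(K:ℝ)+1) ≠ 0 := by positivity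
    have d2 : (2*(K:ℝ)+2) ≠ 0 := by positivity
    have d3 : (2*(K:ℝ)+3) ≠ 0 := by positivity
    have d4 : ((K:ℝ)+1) ≠ 0 := by positivity
    field_simp
    ring

lemma aux_B_tendsto :
    Tendsto (fun K : ℕ => ∑ j ∈ range (2*K), ((-1:ℝ)^j / ((j:ℝ)+2))) atTop
      (𝓝 (1 - Real.log 2)) := by
  have h2K : Tendsto (fun K : ℕ => 2*K) atTop atTop :=
    tendsto_atTop_mono (fun K => by dsimp; omega) tendsto_id
  have hH : Tendsto (fun K : ℕ => (harmonic (2*K) : ℝ) - (harmonic K : ℝ)) atTop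
      (𝓝 (Real.log 2)) := by
    have hA := Real.tendsto_harmonic_sub_log
    have h := ((hA.comp h2K).sub hA).add_const (Real.log 2)
    rw [sub_self, zero_add] at h
    refine h.congr' ?_
    filter_upwards [eventually_ge_atTop 1] with K hK
    have hK0 : (K:ℝ) ≠ 0 := by positivity
    simp only [Function.comp]
    have : Real.log ((2*K : ℕ) : ℝ) = Real.log 2 + Real.log K := by
      push_cast
      rw [← Real.log_mul two_ne_zero hK0]
    rw [this]
    ring
  have hz : Tendsto (fun K : ℕ => 1/(2*(K:ℝ)+1)) atTop (𝓝 0) := by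
    refine squeeze_zero (fun K => by positivity) (fun K => ?_)
      tendsto_one_div_add_atTop_nhds_zero_nat
    have : (0:ℝ) ≤ K := Nat.cast_nonneg K
    apply div_le_div_of_nonneg_left (by norm_num) (by positivity)
    linarith
  have h := ((tendsto_const_nhds (x := (1:ℝ))).sub hH).sub hz
  rw [sub_zero] at h
  refine h.congr (fun K => ?_)
  rw [aux_B]

lemma aux_even_tendsto :
    Tendsto (fun K : ℕ => ∑ j ∈ range (2*K),
      ((-1:ℝ)^j * (Real.log (((j:ℝ)+2)/((j:ℝ)+1)) - 1/((j:ℝ)+2)))) atTop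
      (𝓝 (Real.log Real.pi - 1)) := by
  have h := aux_wallis_log.sub aux_B_tendsto
  have hv : Real.log (Real.pi/2) - (1 - Real.log 2) = Real.log Real.pi - 1 := by
    rw [Real.log_div Real.pi_ne_zero two_ne_zero]
    ring
  rw [hv] at h
  refine h.congr (fun K => ?_)
  rw [← Finset.sum_sub_distrib]
  refine Finset.sum_congr rfl (fun j _ => ?_)
  rw [Real.log_div (by positivity) (by positivity)]
  ring

set_option maxHeartbeats 1000000 in
/-- `log π = 1 + ∑_{k=2}^∞ (1 − (1 − 2^{1−k})ζ(k))/k`. -/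
theorem stmt_7 :
    HasSum (fun k : ℕ =>
        (1 - (1 - 2 ^ (-(k + 1) : ℤ)) * ∑' n : ℕ, (1 : ℝ) / (n + 1) ^ (k + 2)) / (k + 2))
      (Real.log Real.pi - 1) := by
  set F : ℕ × ℕ → ℝ := fun p => ((-1:ℝ)^p.1 / (p.1+2)^(p.2+2)) / (p.2+2) with hF
  have hsum : Summable F := aux_summable
  -- sum along j-fibers (inner sum over k)
  have hJ : HasSum (fun j : ℕ => (-1:ℝ)^j * (Real.log (((j:ℝ)+2)/((j:ℝ)+1)) - 1/((j:ℝ)+2)))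
      (∑' p, F p) :=
    HasSum.prod_fiberwise hsum.hasSum (fun j => aux_logser j)
  -- sum along k-fibers
  have hsum2 : Summable (fun p : ℕ × ℕ => F (Equiv.prodComm ℕ ℕ p)) :=
    (Equiv.summable_iff (Equiv.prodComm ℕ ℕ)).2 hsum
  have htse : ∑' p, F (Equiv.prodComm ℕ ℕ p) = ∑' p, F p :=
    Equiv.tsum_eq (Equiv.prodComm ℕ ℕ) F
  have hK : HasSum (fun k : ℕ =>
      (1 - (1 - 2 ^ (-(k + 1) : ℤ)) * ∑' n : ℕ, (1 : ℝ) / (n + 1) ^ (k + 2)) / (k + 2))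
      (∑' p, F p) := by
    rw [← htse]
    refine HasSum.prod_fiberwise hsum2.hasSum (fun k => ?_)
    exact (aux_eta k).div_const _
  -- identify the total sum via even partial sums of the j-direction
  have h2K : Tendsto (fun K : ℕ => 2*K) atTop atTop :=
    tendsto_atTop_mono (fun K => by dsimp; omega) tendsto_id
  have hlim : Tendsto (fun K : ℕ => ∑ j ∈ range (2*K),
      ((-1:ℝ)^j * (Real.log (((j:ℝ)+2)/((j:ℝ)+1)) - 1/((j:ℝ)+2)))) atTop (𝓝 (∑' p, F p)) :=
    hJ.tendsto_sum_nat.comp h2K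
  have : (∑' p, F p) = Real.log Real.pi - 1 := tendsto_nhds_unique hlim aux_even_tendsto
  rwa [this] at hK

end stmt7aux
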